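/- Let s ∈ ℕ, d = 2s, and let p₀, …, p_d ∈ ℂ. Define p : ℂ → ℂ by p(z) = Σ_{k=0}^d p_k·z^k·conj(z)^{d−k}, and assume p is real-valued (Im p(z) = 0 for all z ∈ ℂ). If there is δ > 0 such that p(z) ≥ 0 for all z ∈ ℂ with |z| < δ, then the middle coefficient p_s is real and nonnegative, i.e. Im p_s = 0 and Re p_s ≥ 0. -/

import Mathlib

/-- for a real-valued homogeneous polynomial `p(z) = Σ_k p_k z^k conj(z)^{2s-k}`
of even degree `d = 2s` that is nonnegative near `0`, the middle coefficient `p_s` is real and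
nonnegative. -/
theorem boundary_jets_stmt16 (s : ℕ) (pc : ℕ → ℂ)
    (p : ℂ → ℂ)
    (hp : ∀ z : ℂ, p z = ∑ k ∈ Finset.range (2 * s + 1),
      pc k * z ^ k * (starRingEnd ℂ z) ^ (2 * s - k))
    (hreal : ∀ z : ℂ, (p z).im = 0)
    (δ : ℝ) (hδ : 0 < δ)
    (hpos : ∀ z : ℂ, ‖z‖ < δ → 0 ≤ (p z).re) :
    (pc s).im = 0 ∧ 0 ≤ (pc s).re := by
  set N : ℕ := 2 * s + 1 with hNdef
  have hN0 : N ≠ 0 := by omega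
  set ζ : ℂ := Complex.exp (2 * Real.pi * Complex.I / N) with hζdef
  have hprim : IsPrimitiveRoot ζ N := Complex.isPrimitiveRoot_exp N hN0
  have hζN : ζ ^ N = 1 := hprim.pow_eq_one
  have habs : ‖ζ‖ = 1 := Complex.norm_eq_one_of_pow_eq_one hζN hN0
  have hconj : (starRingEnd ℂ) ζ = ζ ^ (N - 1) := by
    rw [← Complex.inv_eq_conj habs]
    refine (eq_inv_of_mul_eq_one_left ?_).symm
    rw [← pow_succ, hNdef]
    simpa using hζN
  set e : ℕ → ℕ := fun k => k + (N - 1) * (2 * s - k) with hedef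
  have hgeom : ∀ m : ℕ, ∑ j ∈ Finset.range N, (ζ ^ m) ^ j
      = if N ∣ m then (N : ℂ) else 0 := by
    intro m
    by_cases h : N ∣ m
    · rw [(hprim.pow_eq_one_iff_dvd m).2 h]
      simp [h]
    · have hne : ζ ^ m ≠ 1 := fun hh => h ((hprim.pow_eq_one_iff_dvd m).1 hh)
      rw [geom_sum_eq hne]
      have : (ζ ^ m) ^ N = 1 := by
        rw [← pow_mul, mul_comm, pow_mul, hζN, one_pow]
      simp [this, h]
  have hdvde : ∀ k < N, (N ∣ e k ↔ k = s) := by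
    intro k hk
    constructor
    · intro hdvd
      obtain ⟨c, hc⟩ := hdvd
      have h1 : N - 1 = 2 * s := by omega
      rw [hedef] at hc
      simp only [h1] at hc
      have hk' : k ≤ 2 * s := by omega
      have hcz : (k : ℤ) + 2 * s * (2 * s - k) = (2 * s + 1) * c := by
        rw [hNdef] at hc
        zify [hk'] at hc
        linarith [hc]
      have h2 : ((2 * s + 1 : ℕ) : ℤ) ∣ (2 * k - 2 * s) := by
        refine ⟨c - (2 * s - k), ?_⟩
        push_cast
        push_cast at hcz
        linarith [hcz]
      have h3 : (2 * (k : ℤ) - 2 * s) = 0 := by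
        refine Int.eq_zero_of_abs_lt_dvd (by exact_mod_cast h2) ?_
        rw [abs_lt]
        have hk2 : (k : ℤ) ≤ 2 * s := by exact_mod_cast hk'
        constructor <;> push_cast <;> omega
      omega
    · intro hks
      rw [hks]
      refine ⟨s, ?_⟩
      have h2 : 2 * s - s = s := by omega
      have h1 : N - 1 = 2 * s := by omega
      simp only [hedef]
      rw [h2, h1, hNdef]
      ring
  set r : ℝ := δ / 2 with hrdef
  have hr0 : 0 < r := by positivity
  have hrδ : r < δ := by rw [hrdef]; linarith
  have key : ∑ j ∈ Finset.range N, p ((r : ℂ) * ζ ^ j)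
      = ((N * r ^ (2 * s) : ℝ) : ℂ) * pc s := by
    have expand : ∀ j, p ((r : ℂ) * ζ ^ j)
        = ∑ k ∈ Finset.range N, pc k * (r : ℂ) ^ (2 * s) * (ζ ^ e k) ^ j := by
      intro j
      rw [hp]
      refine Finset.sum_congr rfl fun k hk => ?_
      have hk' : k ≤ 2 * s := by
        simp only [Finset.mem_range, hNdef] at hk ⊢; omega
      have hc1 : (starRingEnd ℂ) ((r : ℂ) * ζ ^ j) = (r : ℂ) * ζ ^ ((N - 1) * j) := by
        rw [map_mul, map_pow, hconj, Complex.conj_ofReal, ← pow_mul]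
      rw [hc1]
      have hrpow : (r : ℂ) ^ k * (r : ℂ) ^ (2 * s - k) = (r : ℂ) ^ (2 * s) := by
        rw [← pow_add]; congr 1; omega
      have hζpow : (ζ ^ j) ^ k * (ζ ^ ((N - 1) * j)) ^ (2 * s - k) = (ζ ^ e k) ^ j := by
        rw [← pow_mul, ← pow_mul, ← pow_mul, ← pow_add]
        congr 1
        simp only [hedef]
        ring
      calc pc k * ((r : ℂ) * ζ ^ j) ^ k * ((r : ℂ) * ζ ^ ((N - 1) * j)) ^ (2 * s - k)
          = pc k * ((r : ℂ) ^ k * (r : ℂ) ^ (2 * s - k))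
              * ((ζ ^ j) ^ k * (ζ ^ ((N - 1) * j)) ^ (2 * s - k)) := by
            rw [mul_pow, mul_pow]; ring
        _ = pc k * (r : ℂ) ^ (2 * s) * (ζ ^ e k) ^ j := by rw [hrpow, hζpow]
    calc ∑ j ∈ Finset.range N, p ((r : ℂ) * ζ ^ j)
        = ∑ j ∈ Finset.range N, ∑ k ∈ Finset.range N,
            pc k * (r : ℂ) ^ (2 * s) * (ζ ^ e k) ^ j :=
          Finset.sum_congr rfl fun j _ => expand j
      _ = ∑ k ∈ Finset.range N, pc k * (r : ℂ) ^ (2 * s) * ∑ j ∈ Finset.range N, (ζ ^ e k) ^ j := by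
          rw [Finset.sum_comm]
          exact Finset.sum_congr rfl fun k _ => by rw [Finset.mul_sum]
      _ = ∑ k ∈ Finset.range N, pc k * (r : ℂ) ^ (2 * s) * (if k = s then (N : ℂ) else 0) := by
          refine Finset.sum_congr rfl fun k hk => ?_
          rw [hgeom (e k)]
          congr 1
          simp [hdvde k (Finset.mem_range.1 hk)]
      _ = pc s * (r : ℂ) ^ (2 * s) * (N : ℂ) := by
          rw [Finset.sum_eq_single s]
          · simp
          · intro k _ hks; simp [hks]
          · intro h; exact absurd (Finset.mem_range.2 (by omega)) h
      _ = ((N * r ^ (2 * s) : ℝ) : ℂ) * pc s := by push_cast; ring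
  have habsz : ∀ j : ℕ, ‖(r : ℂ) * ζ ^ j‖ < δ := by
    intro j
    rw [norm_mul, norm_pow, Complex.norm_real]
    rw [show ‖ζ‖ = 1 from habs]
    simpa [abs_of_pos hr0] using hrδ
  have hSim : (∑ j ∈ Finset.range N, p ((r : ℂ) * ζ ^ j)).im = 0 := by
    rw [Complex.im_sum]
    exact Finset.sum_eq_zero fun j _ => hreal _
  have hSre : 0 ≤ (∑ j ∈ Finset.range N, p ((r : ℂ) * ζ ^ j)).re := by
    rw [Complex.re_sum]
    exact Finset.sum_nonneg fun j _ => hpos _ (habsz j)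
  rw [key] at hSim hSre
  have hc : (0 : ℝ) < N * r ^ (2 * s) := by positivity
  constructor
  · have h1 : (N * r ^ (2 * s) : ℝ) * (pc s).im = 0 := by
      rw [Complex.im_ofReal_mul] at hSim; exact hSim
    exact (mul_eq_zero.1 h1).resolve_left hc.ne'
  · have h1 : 0 ≤ (N * r ^ (2 * s) : ℝ) * (pc s).re := by
      rw [Complex.re_ofReal_mul] at hSre; exact hSre
    nlinarith
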